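/- Let T be a countable set of traces and f : T^n → T a function (Skolem function). Then there exists an injection g : T^(n+1) → ℕ, and one can define a marking of traces such that for every tuple (t₁,…,t_{n+1}) ∈ T^(n+1), the tuple satisfies t_{n+1} = f(t₁,…,t_n) if and only if there exists j ∈ ℕ at which all n+1 marked copies simultaneously carry their respective marks; moreover such a j, if it exists, is unique. -/
import Mathlib


/-- The marking of traces induced by an injection `g` and a Skolem function `f`:
trace `t` carries mark `i` at position `j` iff `j = g (t₁,…,t_{n+1})` for some tuple
with `t = tᵢ` and `t_{n+1} = f (t₁,…,t_n)`. -/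
def marked {AP : Type*} {T : Set (ℕ → Set AP)} {n : ℕ}
    (f : (Fin n → T) → T) (g : (Fin (n + 1) → T) → ℕ)
    (i : Fin (n + 1)) (t : T) (j : ℕ) : Prop :=
  ∃ tup : Fin (n + 1) → T, t = tup i ∧ j = g tup ∧
    tup (Fin.last n) = f (fun i' => tup i'.castSucc)

/-- For a countable set `T` of traces and a Skolem function `f : T^n → T`, there is
an injection `g : T^(n+1) → ℕ` such that, with the induced marking, a tuple
`(t₁,…,t_{n+1})` satisfies `t_{n+1} = f (t₁,…,t_n)` iff there is a position `j` at
which all `n+1` marked copies simultaneously carry their marks; such a `j` is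
moreover unique. -/
theorem skolem_marking {AP : Type*} (T : Set (ℕ → Set AP)) (hT : T.Countable)
    (n : ℕ) (f : (Fin n → T) → T) :
    ∃ g : (Fin (n + 1) → T) → ℕ, Function.Injective g ∧
      ∀ tup : Fin (n + 1) → T,
        ((tup (Fin.last n) = f (fun i => tup i.castSucc)) ↔
          ∃ j : ℕ, ∀ i, marked f g i (tup i) j) ∧
        ∀ j j' : ℕ, (∀ i, marked f g i (tup i) j) → (∀ i, marked f g i (tup i) j') →
          j = j' := by
  haveI : Countable T := hT.to_subtype
  obtain ⟨g, hg⟩ := Countable.exists_injective_nat (Fin (n + 1) → T)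
  refine ⟨g, hg, fun tup => ?_⟩
  -- key: from all marks at j, recover the tuple
  have key : ∀ j : ℕ, (∀ i, marked f g i (tup i) j) →
      j = g tup ∧ tup (Fin.last n) = f (fun i => tup i.castSucc) := by
    intro j h
    obtain ⟨s, hs1, hs2, hs3⟩ := h (Fin.last n)
    have hts : tup = s := by
      funext i
      obtain ⟨s', h1, h2, h3⟩ := h i
      have : s' = s := hg (h2 ▸ hs2)
      rw [h1, this]
    subst hts
    exact ⟨hs2, hs3⟩
  constructor
  · constructor
    · intro h
      exact ⟨g tup, fun i => ⟨tup, rfl, rfl, h⟩⟩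
    · rintro ⟨j, hj⟩
      exact (key j hj).2
  · intro j j' hj hj'
    rw [(key j hj).1, (key j' hj').1]
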